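/- Information cost lower bound for Equality: let k ≥ 1, let T be a finite transcript set with nonnegative functions a, b : {0,1}^k × T → ℝ≥0 such that π^{x,y}(τ) := a(x,τ)·b(y,τ) is a probability distribution on T for every x, y ∈ {0,1}^k, and let o : T → {0,1} be an output function such that for all x, y ∈ {0,1}^k, Σ_{τ : o(τ) ≠ EQ(x,y)} π^{x,y}(τ) ≤ 1/3, where EQ(x,y) = 1 iff x = y. Let X, Y be independent uniform random variables on {0,1}^k and let Π be a random transcript distributed as π^{X,Y} given (X,Y). Then I(X : Π | Y) + I(Y : Π | X) ≥ 1/432. -/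

import Mathlib

open Finset

/-- Distribution of the random variable `f` on a finite probability space `(Ω, p)`. -/
noncomputable def distOf {Ω T : Type} [Fintype Ω] [Fintype T] [DecidableEq T]
    (p : Ω → ℝ) (f : Ω → T) : T → ℝ :=
  fun t => ∑ ω, if f ω = t then p ω else 0

/-- Shannon entropy (base-2) of a distribution on a finite set. -/
noncomputable def shannonEnt {T : Type} [Fintype T] (q : T → ℝ) : ℝ :=
  -∑ t, q t * Real.logb 2 (q t)

/-- Entropy `H(f)` of a random variable `f` on `(Ω, p)`. -/
noncomputable def Hrv {Ω T : Type} [Fintype Ω] [Fintype T] [DecidableEq T]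
    (p : Ω → ℝ) (f : Ω → T) : ℝ :=
  shannonEnt (distOf p f)

/-- Mutual information `I(f : g) = H(f) + H(g) − H(f,g)` on `(Ω, p)`. -/
noncomputable def mutInfo {Ω A B : Type} [Fintype Ω] [Fintype A] [DecidableEq A]
    [Fintype B] [DecidableEq B] (p : Ω → ℝ) (f : Ω → A) (g : Ω → B) : ℝ :=
  Hrv p f + Hrv p g - Hrv p (fun ω => (f ω, g ω))

/-- Conditional mutual information `I(f : g | h) = I(f : gh) − I(f : h)` on `(Ω, p)`. -/
noncomputable def condMutInfo {Ω A B C : Type} [Fintype Ω] [Fintype A] [DecidableEq A]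
    [Fintype B] [DecidableEq B] [Fintype C] [DecidableEq C]
    (p : Ω → ℝ) (f : Ω → A) (g : Ω → B) (h : Ω → C) : ℝ :=
  mutInfo p f (fun ω => (g ω, h ω)) - mutInfo p f h

/-- A private-coin randomized communication protocol on input set `I`, modelled by its
finite transcript set `T`, nonnegative functions `a, b : I → T → ℝ` such that
`π^{x,y}(τ) = a(x,τ)·b(y,τ)` is a probability distribution on `T` for every `(x,y)`
(rectangle property), and an output function `o : T → {0,1}`. -/
structure Protocol (I : Type) where
  T : Type
  [instFin : Fintype T]
  [instDec : DecidableEq T]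
  a : I → T → ℝ
  b : I → T → ℝ
  o : T → Bool
  a_nonneg : ∀ x τ, 0 ≤ a x τ
  b_nonneg : ∀ y τ, 0 ≤ b y τ
  sums_one : ∀ x y, ∑ τ, a x τ * b y τ = 1

attribute [instance] Protocol.instFin Protocol.instDec

/-- Probability that the protocol's output on input `(x, y)` differs from `v`:
`Σ_{τ : o(τ) ≠ v} π^{x,y}(τ)`. -/
noncomputable def errOn {I : Type} (P : Protocol I) (x y : I) (v : Bool) : ℝ :=
  ∑ τ ∈ Finset.univ.filter (fun τ => P.o τ ≠ v), P.a x τ * P.b y τ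

/-- The internal information cost `I(X : Π | Y) + I(Y : Π | X)` of the protocol, where
`X, Y` are independent and uniformly distributed on `I` and `Π` is the transcript,
distributed as `π^{X,Y}` given `(X,Y)`. -/
noncomputable def infoCost {I : Type} [Fintype I] [DecidableEq I] (P : Protocol I) : ℝ :=
  let p : I × I × P.T → ℝ := fun ω =>
    (Fintype.card I : ℝ)⁻¹ * (Fintype.card I : ℝ)⁻¹ * (P.a ω.1 ω.2.2 * P.b ω.2.1 ω.2.2)
  condMutInfo p (fun ω => ω.1) (fun ω => ω.2.2) (fun ω => ω.2.1)
    + condMutInfo p (fun ω => ω.2.1) (fun ω => ω.2.2) (fun ω => ω.1)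


/- ------------------ Auxiliary lemmas ------------------ -/

section Helpers
open Real

lemma sqrt_mul_le_half (a b : ℝ) (ha : 0 ≤ a) (hb : 0 ≤ b) :
    Real.sqrt (a * b) ≤ (a + b) / 2 := by
  nlinarith [Real.sq_sqrt ha, Real.sq_sqrt hb, sq_nonneg (Real.sqrt a - Real.sqrt b),
    Real.sqrt_mul ha b, Real.sqrt_nonneg a, Real.sqrt_nonneg b]

lemma sum_sqrt_mul_le_one {T : Type} [Fintype T] (p q : T → ℝ)
    (hp : ∀ τ, 0 ≤ p τ) (hq : ∀ τ, 0 ≤ q τ)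
    (hp1 : ∑ τ, p τ = 1) (hq1 : ∑ τ, q τ = 1) :
    ∑ τ, Real.sqrt (p τ * q τ) ≤ 1 := by
  calc ∑ τ, Real.sqrt (p τ * q τ) ≤ ∑ τ, (p τ + q τ) / 2 :=
        Finset.sum_le_sum fun τ _ => sqrt_mul_le_half _ _ (hp τ) (hq τ)
    _ = 1 := by rw [← Finset.sum_div, Finset.sum_add_distrib, hp1, hq1]; norm_num

noncomputable def sqv {T : Type} [Fintype T] (p : T → ℝ) : EuclideanSpace ℝ T :=
  WithLp.toLp 2 (fun τ => Real.sqrt (p τ))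

lemma sqv_normsq {T : Type} [Fintype T] (p q : T → ℝ)
    (hp : ∀ τ, 0 ≤ p τ) (hq : ∀ τ, 0 ≤ q τ) :
    ‖sqv p - sqv q‖ ^ 2 = ∑ τ, p τ + ∑ τ, q τ - 2 * ∑ τ, Real.sqrt (p τ * q τ) := by
  have h1 : ‖sqv p - sqv q‖ ^ 2 = ∑ τ, (Real.sqrt (p τ) - Real.sqrt (q τ)) ^ 2 := by
    rw [EuclideanSpace.norm_eq, Real.sq_sqrt (Finset.sum_nonneg fun τ _ => by positivity)]
    refine Finset.sum_congr rfl fun τ _ => ?_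
    simp [sqv, Real.norm_eq_abs, sq_abs]
  rw [h1]
  have h2 : ∀ τ, (Real.sqrt (p τ) - Real.sqrt (q τ)) ^ 2
      = p τ + q τ - 2 * Real.sqrt (p τ * q τ) := by
    intro τ
    rw [sub_sq, Real.sq_sqrt (hp τ), Real.sq_sqrt (hq τ), Real.sqrt_mul (hp τ)]
    ring
  rw [Finset.sum_congr rfl fun τ _ => h2 τ]
  rw [Finset.sum_sub_distrib, Finset.sum_add_distrib, ← Finset.mul_sum]

lemma sqv_dist_ge {T : Type} [Fintype T] [DecidableEq T] (p q : T → ℝ) (E : Finset T) (hp : ∀ τ, 0 ≤ p τ) (hq : ∀ τ, 0 ≤ q τ)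
    (hp1 : ∑ τ, p τ = 1) (hq1 : ∑ τ, q τ = 1)
    (hpE : 2/3 ≤ ∑ τ ∈ E, p τ) (hqE : ∑ τ ∈ E, q τ ≤ 1/3) :
    1/3 ≤ ‖sqv p - sqv q‖ := by
  -- total variation lower bound
  have habs : ∀ τ, |p τ - q τ| = |Real.sqrt (p τ) - Real.sqrt (q τ)| * (Real.sqrt (p τ) + Real.sqrt (q τ)) := by
    intro τ
    have h1 : (Real.sqrt (p τ) - Real.sqrt (q τ)) * (Real.sqrt (p τ) + Real.sqrt (q τ)) = p τ - q τ := by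
      have := Real.sq_sqrt (hp τ); have := Real.sq_sqrt (hq τ); nlinarith
    rw [← h1, abs_mul, abs_of_nonneg (show (0:ℝ) ≤ Real.sqrt (p τ) + Real.sqrt (q τ) by positivity)]
  have hsplit := Finset.sum_add_sum_compl E (fun τ => |p τ - q τ|)
  have hE1 : ∑ τ ∈ E, (p τ - q τ) ≤ ∑ τ ∈ E, |p τ - q τ| :=
    Finset.sum_le_sum fun τ _ => le_abs_self _
  have hE2 : ∑ τ ∈ Eᶜ, (q τ - p τ) ≤ ∑ τ ∈ Eᶜ, |p τ - q τ| :=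
    Finset.sum_le_sum fun τ _ => by rw [abs_sub_comm]; exact le_abs_self _
  have hpc := Finset.sum_add_sum_compl E p
  have hqc := Finset.sum_add_sum_compl E q
  rw [hp1] at hpc; rw [hq1] at hqc
  have htv : 2/3 ≤ ∑ τ, |p τ - q τ| := by
    rw [Finset.sum_sub_distrib] at hE1 hE2
    linarith [hsplit]
  -- Cauchy–Schwarz
  have hcs := Finset.sum_mul_sq_le_sq_mul_sq Finset.univ
      (fun τ => |Real.sqrt (p τ) - Real.sqrt (q τ)|) (fun τ => Real.sqrt (p τ) + Real.sqrt (q τ))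
  have hfg : ∑ τ, |Real.sqrt (p τ) - Real.sqrt (q τ)| * (Real.sqrt (p τ) + Real.sqrt (q τ))
      = ∑ τ, |p τ - q τ| := by
    refine Finset.sum_congr rfl fun τ _ => (habs τ).symm
  have hf2 : ∑ τ, |Real.sqrt (p τ) - Real.sqrt (q τ)| ^ 2 = ‖sqv p - sqv q‖ ^ 2 := by
    rw [sqv_normsq p q hp hq, hp1, hq1]
    have : ∀ τ, |Real.sqrt (p τ) - Real.sqrt (q τ)| ^ 2
        = p τ + q τ - 2 * Real.sqrt (p τ * q τ) := by
      intro τ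
      rw [sq_abs, sub_sq, Real.sq_sqrt (hp τ), Real.sq_sqrt (hq τ), Real.sqrt_mul (hp τ)]
      ring
    rw [Finset.sum_congr rfl fun τ _ => this τ, Finset.sum_sub_distrib,
      Finset.sum_add_distrib, hp1, hq1, ← Finset.mul_sum]
  have hg2 : ∑ τ, (Real.sqrt (p τ) + Real.sqrt (q τ)) ^ 2 ≤ 4 := by
    have : ∀ τ, (Real.sqrt (p τ) + Real.sqrt (q τ)) ^ 2
        = p τ + q τ + 2 * Real.sqrt (p τ * q τ) := by
      intro τ
      rw [add_sq, Real.sq_sqrt (hp τ), Real.sq_sqrt (hq τ), Real.sqrt_mul (hp τ)]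
      ring
    rw [Finset.sum_congr rfl fun τ _ => this τ, Finset.sum_add_distrib,
      Finset.sum_add_distrib, hp1, hq1, ← Finset.mul_sum]
    linarith [sum_sqrt_mul_le_one p q hp hq hp1 hq1]
  rw [hfg, hf2] at hcs
  have hnn : (0:ℝ) ≤ ‖sqv p - sqv q‖ := norm_nonneg _
  have hsq : (0:ℝ) ≤ ∑ τ, (Real.sqrt (p τ) + Real.sqrt (q τ)) ^ 2 :=
    Finset.sum_nonneg fun τ _ => sq_nonneg _
  nlinarith [hcs, htv, hg2]

lemma shannonEnt_smul {T : Type} [Fintype T] (w : T → ℝ) (hw : ∀ s, 0 ≤ w s) {c : ℝ} (hc : 0 < c) :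
    shannonEnt (fun s => c * w s) = c * shannonEnt w - (c * ∑ s, w s) * Real.logb 2 c := by
  have h : ∀ s, (c * w s) * Real.logb 2 (c * w s)
      = c * (w s * Real.logb 2 (w s)) + (c * w s) * Real.logb 2 c := by
    intro s
    rcases eq_or_lt_of_le (hw s) with h0 | h0
    · rw [← h0]; simp
    · rw [Real.logb_mul (ne_of_gt hc) (ne_of_gt h0)]; ring
  unfold shannonEnt
  rw [Finset.sum_congr rfl fun s _ => h s, Finset.sum_add_distrib, ← Finset.mul_sum,
    ← Finset.sum_mul, ← Finset.mul_sum]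
  ring

lemma klgeneric {T : Type} [Fintype T] (p q : T → ℝ) (hp : ∀ τ, 0 ≤ p τ) (hq : ∀ τ, 0 ≤ q τ)
    (hp1 : ∑ τ, p τ = 1) (hq1 : ∑ τ, q τ = 1) (hsupp : ∀ τ, 0 < p τ → 0 < q τ) :
    ‖sqv p - sqv q‖ ^ 2 ≤ ∑ τ, (p τ * Real.logb 2 (p τ) - p τ * Real.logb 2 (q τ)) := by
  have key : ∀ τ, p τ * Real.log (q τ / p τ) ≤ 2 * (Real.sqrt (p τ * q τ) - p τ) := by
    intro τ
    rcases eq_or_lt_of_le (hp τ) with h0 | h0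
    · rw [← h0]; simp
    · have hq0 := hsupp τ h0
      have hd : 0 < q τ / p τ := div_pos hq0 h0
      have l1 : Real.log (q τ / p τ) = 2 * Real.log (Real.sqrt (q τ / p τ)) := by
        rw [Real.log_sqrt hd.le]; ring
      have l2 : Real.log (Real.sqrt (q τ / p τ)) ≤ Real.sqrt (q τ / p τ) - 1 :=
        Real.log_le_sub_one_of_pos (Real.sqrt_pos.mpr hd)
      have l3 : p τ * Real.sqrt (q τ / p τ) = Real.sqrt (p τ * q τ) := by
        rw [show p τ * q τ = (p τ)^2 * (q τ / p τ) by field_simp,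
          Real.sqrt_mul (sq_nonneg _), Real.sqrt_sq h0.le]
      calc p τ * Real.log (q τ / p τ) = 2 * (p τ * Real.log (Real.sqrt (q τ / p τ))) := by
            rw [l1]; ring
        _ ≤ 2 * (p τ * (Real.sqrt (q τ / p τ) - 1)) := by
            have := mul_le_mul_of_nonneg_left l2 h0.le; linarith
        _ = 2 * (Real.sqrt (p τ * q τ) - p τ) := by rw [← l3]; ring
  have hsum : ∑ τ, p τ * Real.log (q τ / p τ) ≤ 2 * (∑ τ, Real.sqrt (p τ * q τ)) - 2 := by
    calc ∑ τ, p τ * Real.log (q τ / p τ) ≤ ∑ τ, 2 * (Real.sqrt (p τ * q τ) - p τ) :=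
          Finset.sum_le_sum fun τ _ => key τ
      _ = 2 * (∑ τ, Real.sqrt (p τ * q τ)) - 2 := by
          rw [← Finset.mul_sum, Finset.sum_sub_distrib, hp1]; ring
  have hid : ∀ τ, p τ * Real.logb 2 (p τ) - p τ * Real.logb 2 (q τ)
      = -(p τ * Real.log (q τ / p τ)) / Real.log 2 := by
    intro τ
    rcases eq_or_lt_of_le (hp τ) with h0 | h0
    · rw [← h0]; simp
    · have hq0 := hsupp τ h0
      rw [Real.logb, Real.logb, Real.log_div (ne_of_gt hq0) (ne_of_gt h0)]
      field_simp
      ring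
  have hlog2 : 0 < Real.log 2 := Real.log_pos (by norm_num)
  have hlog2' : Real.log 2 ≤ 1 := by
    have := Real.log_le_sub_one_of_pos (show (0:ℝ) < 2 by norm_num); linarith
  have hBC : 0 ≤ 2 - 2 * ∑ τ, Real.sqrt (p τ * q τ) := by
    linarith [sum_sqrt_mul_le_one p q hp hq hp1 hq1]
  rw [Finset.sum_congr rfl fun τ _ => hid τ, ← Finset.sum_div, Finset.sum_neg_distrib]
  rw [sqv_normsq p q hp hq, hp1, hq1]
  rw [le_div_iff₀ hlog2]
  nlinarith [hsum, hBC, hlog2, hlog2']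

lemma sum_KL_ge {I T : Type} [Fintype I] [Nonempty I] [Fintype T] (p : I → T → ℝ)
    (hp : ∀ x τ, 0 ≤ p x τ) (hp1 : ∀ x, ∑ τ, p x τ = 1) :
    ∑ x, ‖sqv (p x) - sqv (fun τ => (Fintype.card I : ℝ)⁻¹ * ∑ x', p x' τ)‖ ^ 2
      ≤ ∑ x, (shannonEnt (fun τ => (Fintype.card I : ℝ)⁻¹ * ∑ x', p x' τ) - shannonEnt (p x)) := by
  have hn0 : (0:ℝ) < (Fintype.card I : ℝ) := by
    exact_mod_cast Fintype.card_pos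
  set n : ℝ := (Fintype.card I : ℝ) with hndef
  set q : T → ℝ := fun τ => n⁻¹ * ∑ x', p x' τ with hqdef
  have hq : ∀ τ, 0 ≤ q τ := fun τ => by
    have : 0 ≤ ∑ x', p x' τ := Finset.sum_nonneg fun x' _ => hp x' τ
    positivity
  have hnq : ∀ τ, ∑ x, p x τ = n * q τ := by
    intro τ; rw [hqdef]; field_simp
  have hq1 : ∑ τ, q τ = 1 := by
    have : ∑ τ, ∑ x', p x' τ = n := by
      rw [Finset.sum_comm]
      rw [Finset.sum_congr rfl fun x _ => hp1 x, Finset.sum_const, Finset.card_univ,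
        nsmul_eq_mul, mul_one]
    rw [hqdef]
    simp only [← Finset.mul_sum, this]
    field_simp
  have hsupp : ∀ x τ, 0 < p x τ → 0 < q τ := by
    intro x τ hx
    have h1 : p x τ ≤ ∑ x', p x' τ :=
      Finset.single_le_sum (fun x' _ => hp x' τ) (Finset.mem_univ x)
    have : 0 < ∑ x', p x' τ := lt_of_lt_of_le hx h1
    rw [hqdef]; positivity
  have hid : ∑ x, (shannonEnt q - shannonEnt (p x))
      = ∑ x, ∑ τ, (p x τ * Real.logb 2 (p x τ) - p x τ * Real.logb 2 (q τ)) := by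
    have e2 : ∑ x : I, ∑ τ, p x τ * Real.logb 2 (q τ) = n * -shannonEnt q := by
      rw [Finset.sum_comm]
      have h1 : ∀ τ, ∑ x : I, p x τ * Real.logb 2 (q τ) = n * (q τ * Real.logb 2 (q τ)) := by
        intro τ; rw [← Finset.sum_mul, hnq τ]; ring
      rw [Finset.sum_congr rfl fun τ _ => h1 τ, ← Finset.mul_sum]
      unfold shannonEnt; ring
    have lhs : ∑ x : I, (shannonEnt q - shannonEnt (p x))
        = n * shannonEnt q - ∑ x, shannonEnt (p x) := by
      rw [Finset.sum_sub_distrib, Finset.sum_const, Finset.card_univ, nsmul_eq_mul]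
    have rhs : ∑ x : I, ∑ τ, (p x τ * Real.logb 2 (p x τ) - p x τ * Real.logb 2 (q τ))
        = ∑ x, (- shannonEnt (p x)) - (n * -shannonEnt q) := by
      rw [Finset.sum_congr rfl fun x (_ : x ∈ Finset.univ) => Finset.sum_sub_distrib _ _,
        Finset.sum_sub_distrib, e2]
      congr 1
      refine Finset.sum_congr rfl fun x _ => ?_
      unfold shannonEnt; ring
    rw [lhs, rhs, Finset.sum_neg_distrib]; ring
  rw [hid]
  exact Finset.sum_le_sum fun x _ => klgeneric (p x) q (hp x) hq (hp1 x) hq1 (hsupp x)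

lemma distOf_comp_equiv {Ω Ω' S : Type} [Fintype Ω] [Fintype Ω'] [Fintype S] [DecidableEq S]
    (e : Ω' ≃ Ω) (p : Ω → ℝ) (f : Ω → S) :
    distOf (fun ω' => p (e ω')) (fun ω' => f (e ω')) = distOf p f := by
  funext t
  exact Equiv.sum_comp e (fun ω => if f ω = t then p ω else 0)

lemma condMutInfo_comp_equiv {Ω Ω' A B C : Type} [Fintype Ω] [Fintype Ω'] [Fintype A]
    [DecidableEq A] [Fintype B] [DecidableEq B] [Fintype C] [DecidableEq C]
    (e : Ω' ≃ Ω) (p : Ω → ℝ) (f : Ω → A) (g : Ω → B) (h : Ω → C) :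
    condMutInfo (fun ω' => p (e ω')) (fun ω' => f (e ω')) (fun ω' => g (e ω'))
        (fun ω' => h (e ω')) = condMutInfo p f g h := by
  simp only [condMutInfo, mutInfo, Hrv]
  rw [distOf_comp_equiv e p f, distOf_comp_equiv e p h,
    distOf_comp_equiv e p (fun ω => (g ω, h ω)),
    distOf_comp_equiv e p (fun ω => (f ω, (g ω, h ω))),
    distOf_comp_equiv e p (fun ω => (f ω, h ω))]

section CondMIEval
variable {I : Type} [Fintype I] [DecidableEq I] [Nonempty I]
variable {T : Type} [Fintype T] [DecidableEq T]

lemma condMI_eval (a b : I → T → ℝ) (ha : ∀ x τ, 0 ≤ a x τ) (hb : ∀ y τ, 0 ≤ b y τ)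
    (hab : ∀ x y, ∑ τ, a x τ * b y τ = 1) :
    condMutInfo (fun ω : I × I × T =>
        (Fintype.card I : ℝ)⁻¹ * (Fintype.card I : ℝ)⁻¹ * (a ω.1 ω.2.2 * b ω.2.1 ω.2.2))
        (fun ω => ω.1) (fun ω => ω.2.2) (fun ω => ω.2.1)
      = (Fintype.card I : ℝ)⁻¹ * ∑ y, shannonEnt (fun τ => (Fintype.card I : ℝ)⁻¹ * ∑ x, a x τ * b y τ)
        - (Fintype.card I : ℝ)⁻¹ * ((Fintype.card I : ℝ)⁻¹ *
            ∑ x, ∑ y, shannonEnt (fun τ => a x τ * b y τ)) := by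
  have hn0 : (0:ℝ) < (Fintype.card I : ℝ) := by exact_mod_cast Fintype.card_pos
  set n : ℝ := (Fintype.card I : ℝ) with hndef
  set p : I × I × T → ℝ :=
    (fun ω : I × I × T => n⁻¹ * n⁻¹ * (a ω.1 ω.2.2 * b ω.2.1 ω.2.2)) with hpdef

  have hn : n ≠ 0 := ne_of_gt hn0
  -- marginal of X
  have dX : distOf p (fun ω : I × I × T => ω.1) = fun _ => n⁻¹ := by
    funext x0
    show (∑ ω : I × I × T, if ω.1 = x0 then p ω else 0) = n⁻¹
    rw [Fintype.sum_prod_type]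
    have h1 : ∀ x : I, (∑ z : I × T, if (x, z).1 = x0 then p (x, z) else 0)
        = if x = x0 then n⁻¹ * n⁻¹ * n else 0 := by
      intro x
      by_cases h : x = x0
      · simp only [h, eq_self_iff_true, if_true]
        rw [Fintype.sum_prod_type]
        have h2 : ∀ y : I, (∑ τ : T, p (x0, y, τ)) = n⁻¹ * n⁻¹ := by
          intro y
          simp only [hpdef]
          rw [← Finset.mul_sum, hab x0 y, mul_one]
        rw [Finset.sum_congr rfl fun y _ => h2 y, Finset.sum_const, Finset.card_univ,
          nsmul_eq_mul]
        rw [← hndef]; ring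
      · simp [h]
    rw [Finset.sum_congr rfl fun x _ => h1 x, Finset.sum_ite_eq' Finset.univ x0]
    simp only [Finset.mem_univ, if_true]
    field_simp
  -- marginal of Y
  have dY : distOf p (fun ω : I × I × T => ω.2.1) = fun _ => n⁻¹ := by
    funext y0
    show (∑ ω : I × I × T, if ω.2.1 = y0 then p ω else 0) = n⁻¹
    rw [Fintype.sum_prod_type]
    have h1 : ∀ x : I, (∑ z : I × T, if (x, z).2.1 = y0 then p (x, z) else 0)
        = n⁻¹ * n⁻¹ := by
      intro x
      rw [Fintype.sum_prod_type]
      have h2 : ∀ y : I, (∑ τ : T, if (x, y, τ).2.1 = y0 then p (x, y, τ) else 0)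
          = if y = y0 then n⁻¹ * n⁻¹ else 0 := by
        intro y
        by_cases h : y = y0
        · simp only [h, eq_self_iff_true, if_true]
          simp only [hpdef]
          rw [← Finset.mul_sum, hab x y0, mul_one]
        · simp [h]
      rw [Finset.sum_congr rfl fun y _ => h2 y, Finset.sum_ite_eq' Finset.univ y0]
      simp only [Finset.mem_univ, if_true]
    rw [Finset.sum_congr rfl fun x _ => h1 x, Finset.sum_const, Finset.card_univ, nsmul_eq_mul]
    rw [← hndef]; field_simp
  -- joint of (X, Y)
  have dXY : distOf p (fun ω : I × I × T => (ω.1, ω.2.1)) = fun _ => n⁻¹ * n⁻¹ := by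
    funext z0
    show (∑ ω : I × I × T, if (ω.1, ω.2.1) = z0 then p ω else 0) = n⁻¹ * n⁻¹
    have h1 : ∀ ω : I × I × T, (if (ω.1, ω.2.1) = z0 then p ω else 0)
        = if ω = (z0.1, z0.2, ω.2.2) then p ω else 0 := by
      intro ω
      refine if_congr ?_ rfl rfl
      constructor
      · intro hc
        have h1 : ω.1 = z0.1 := by rw [← hc]
        have h2 : ω.2.1 = z0.2 := by rw [← hc]
        exact Prod.ext h1 (Prod.ext h2 rfl)
      · intro hc
        rw [hc]
    rw [Finset.sum_congr rfl fun ω _ => h1 ω]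
    rw [Fintype.sum_prod_type]
    have h2 : ∀ x : I, (∑ z : I × T, if (x, z) = (z0.1, z0.2, z.2) then p (x, z) else 0)
        = if x = z0.1 then n⁻¹ * n⁻¹ else 0 := by
      intro x
      by_cases h : x = z0.1
      · rw [if_pos h]
        rw [Fintype.sum_prod_type]
        have h3 : ∀ y : I, (∑ τ : T, if (x, y, τ) = (z0.1, z0.2, τ) then p (x, y, τ) else 0)
            = if y = z0.2 then n⁻¹ * n⁻¹ else 0 := by
          intro y
          by_cases h4 : y = z0.2
          · rw [if_pos h4]
            have h5 : ∀ τ : T, (if (x, y, τ) = (z0.1, z0.2, τ) then p (x, y, τ) else 0)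
                = p (x, y, τ) := by
              intro τ
              rw [if_pos (by rw [h, h4])]
            rw [Finset.sum_congr rfl fun τ _ => h5 τ]
            simp only [hpdef]
            rw [← Finset.mul_sum, hab x y, mul_one]
          · rw [if_neg h4]
            refine Finset.sum_eq_zero fun τ _ => ?_
            rw [if_neg]
            intro hc
            apply h4
            have := congrArg (fun w : I × I × T => w.2.1) hc
            exact this
        rw [Finset.sum_congr rfl fun y _ => h3 y, Finset.sum_ite_eq' Finset.univ z0.2]
        simp only [Finset.mem_univ, if_true]
      · rw [if_neg h]
        refine Finset.sum_eq_zero fun z _ => ?_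
        rw [if_neg]
        intro hc
        apply h
        have := congrArg (fun w : I × I × T => w.1) hc
        exact this
    rw [Finset.sum_congr rfl fun x _ => h2 x, Finset.sum_ite_eq' Finset.univ z0.1]
    simp only [Finset.mem_univ, if_true]
  -- joint of (Pi, Y)
  have dPY : distOf p (fun ω : I × I × T => (ω.2.2, ω.2.1))
      = fun z : T × I => n⁻¹ * (n⁻¹ * ∑ x, a x z.1 * b z.2 z.1) := by
    funext z0
    show (∑ ω : I × I × T, if (ω.2.2, ω.2.1) = z0 then p ω else 0)
      = n⁻¹ * (n⁻¹ * ∑ x, a x z0.1 * b z0.2 z0.1)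
    have h1 : ∀ ω : I × I × T, (if (ω.2.2, ω.2.1) = z0 then p ω else 0)
        = if ω.2 = (z0.2, z0.1) then p ω else 0 := by
      intro ω
      refine if_congr ?_ rfl rfl
      constructor
      · intro hc
        have h1 : ω.2.2 = z0.1 := by rw [← hc]
        have h2 : ω.2.1 = z0.2 := by rw [← hc]
        exact Prod.ext h2 h1
      · intro hc
        have h1 : ω.2.1 = z0.2 := by rw [hc]
        have h2 : ω.2.2 = z0.1 := by rw [hc]
        rw [h1, h2]
    rw [Finset.sum_congr rfl fun ω _ => h1 ω]
    rw [Fintype.sum_prod_type]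
    have h2 : ∀ x : I, (∑ z : I × T, if z = (z0.2, z0.1) then p (x, z) else 0)
        = p (x, z0.2, z0.1) := by
      intro x
      rw [Finset.sum_ite_eq' Finset.univ (z0.2, z0.1) (fun z => p (x, z))]
      simp only [Finset.mem_univ, if_true]
    rw [Finset.sum_congr rfl fun x _ => h2 x]
    simp only [hpdef]
    rw [← Finset.mul_sum, Finset.mul_sum]
    rw [← Finset.mul_sum]
    ring_nf
    congr 1
    exact Finset.sum_congr rfl fun x _ => mul_comm _ _
  -- joint of (X, (Pi, Y))
  have dXPY : distOf p (fun ω : I × I × T => (ω.1, (ω.2.2, ω.2.1)))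
      = fun z : I × T × I => n⁻¹ * n⁻¹ * (a z.1 z.2.1 * b z.2.2 z.2.1) := by
    funext z0
    show (∑ ω : I × I × T, if (ω.1, (ω.2.2, ω.2.1)) = z0 then p ω else 0)
      = n⁻¹ * n⁻¹ * (a z0.1 z0.2.1 * b z0.2.2 z0.2.1)
    have h1 : ∀ ω : I × I × T, (if (ω.1, (ω.2.2, ω.2.1)) = z0 then p ω else 0)
        = if ω = (z0.1, z0.2.2, z0.2.1) then p ω else 0 := by
      intro ω
      refine if_congr ?_ rfl rfl
      constructor
      · intro hc
        have e1 : ω.1 = z0.1 := by rw [← hc]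
        have e2 : ω.2.2 = z0.2.1 := by rw [← hc]
        have e3 : ω.2.1 = z0.2.2 := by rw [← hc]
        exact Prod.ext e1 (Prod.ext e3 e2)
      · intro hc
        have e1 : ω.1 = z0.1 := by rw [hc]
        have e2 : ω.2.1 = z0.2.2 := by rw [hc]
        have e3 : ω.2.2 = z0.2.1 := by rw [hc]
        rw [e1, e2, e3]
    rw [Finset.sum_congr rfl fun ω _ => h1 ω]
    rw [Finset.sum_ite_eq' Finset.univ (z0.1, z0.2.2, z0.2.1) p]
    simp only [Finset.mem_univ, if_true, hpdef]
  -- entropies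
  have entX : shannonEnt (fun _ : I => n⁻¹) = Real.logb 2 n := by
    unfold shannonEnt
    rw [Finset.sum_const, Finset.card_univ, nsmul_eq_mul, ← hndef, Real.logb_inv]
    field_simp
  have entXY : shannonEnt (fun _ : I × I => n⁻¹ * n⁻¹) = 2 * Real.logb 2 n := by
    unfold shannonEnt
    rw [Finset.sum_const, Finset.card_univ, nsmul_eq_mul, Fintype.card_prod,
      Real.logb_mul (inv_ne_zero hn) (inv_ne_zero hn), Real.logb_inv]
    push_cast
    rw [← hndef]
    field_simp
    ring
  have hw : ∀ z : T × I, 0 ≤ n⁻¹ * ∑ x, a x z.1 * b z.2 z.1 := fun z =>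
    mul_nonneg (inv_nonneg.mpr hn0.le)
      (Finset.sum_nonneg fun x _ => mul_nonneg (ha x _) (hb _ _))
  have hwsum : ∑ z : T × I, (n⁻¹ * ∑ x, a x z.1 * b z.2 z.1) = n := by
    rw [← Finset.mul_sum, Finset.sum_comm]
    have h1 : ∀ x : I, ∑ z : T × I, a x z.1 * b z.2 z.1 = n := by
      intro x
      rw [Fintype.sum_prod_type, Finset.sum_comm]
      rw [Finset.sum_congr rfl fun y (_ : y ∈ Finset.univ) => hab x y]
      rw [Finset.sum_const, Finset.card_univ, nsmul_eq_mul, mul_one, ← hndef]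
    rw [Finset.sum_congr rfl fun x _ => h1 x, Finset.sum_const, Finset.card_univ,
      nsmul_eq_mul, ← hndef]
    field_simp
  have hwent : shannonEnt (fun z : T × I => n⁻¹ * ∑ x, a x z.1 * b z.2 z.1)
      = ∑ y, shannonEnt (fun τ => n⁻¹ * ∑ x, a x τ * b y τ) := by
    unfold shannonEnt
    rw [Fintype.sum_prod_type, Finset.sum_comm, ← Finset.sum_neg_distrib]
  have entPY : shannonEnt (fun z : T × I => n⁻¹ * (n⁻¹ * ∑ x, a x z.1 * b z.2 z.1))
      = n⁻¹ * ∑ y, shannonEnt (fun τ => n⁻¹ * ∑ x, a x τ * b y τ) + Real.logb 2 n := by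
    have h := shannonEnt_smul (fun z : T × I => n⁻¹ * ∑ x, a x z.1 * b z.2 z.1) hw
      (inv_pos.mpr hn0)
    simp only [] at h
    rw [h, hwsum, hwent, Real.logb_inv, inv_mul_cancel₀ hn]
    ring
  have hw2 : ∀ z : I × T × I, 0 ≤ a z.1 z.2.1 * b z.2.2 z.2.1 := fun z =>
    mul_nonneg (ha _ _) (hb _ _)
  have hw2sum : ∑ z : I × T × I, a z.1 z.2.1 * b z.2.2 z.2.1 = n * n := by
    rw [Fintype.sum_prod_type]
    have h1 : ∀ x : I, ∑ z : T × I, a x z.1 * b z.2 z.1 = n := by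
      intro x
      rw [Fintype.sum_prod_type, Finset.sum_comm]
      rw [Finset.sum_congr rfl fun y (_ : y ∈ Finset.univ) => hab x y]
      rw [Finset.sum_const, Finset.card_univ, nsmul_eq_mul, mul_one, ← hndef]
    rw [Finset.sum_congr rfl fun x _ => h1 x, Finset.sum_const, Finset.card_univ,
      nsmul_eq_mul, ← hndef]
  have hw2ent : shannonEnt (fun z : I × T × I => a z.1 z.2.1 * b z.2.2 z.2.1)
      = ∑ x, ∑ y, shannonEnt (fun τ => a x τ * b y τ) := by
    unfold shannonEnt
    rw [Fintype.sum_prod_type, ← Finset.sum_neg_distrib]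
    refine Finset.sum_congr rfl fun x _ => ?_
    rw [Fintype.sum_prod_type, Finset.sum_comm, ← Finset.sum_neg_distrib]
  have entXPY : shannonEnt (fun z : I × T × I => n⁻¹ * n⁻¹ * (a z.1 z.2.1 * b z.2.2 z.2.1))
      = n⁻¹ * (n⁻¹ * ∑ x, ∑ y, shannonEnt (fun τ => a x τ * b y τ)) + 2 * Real.logb 2 n := by
    have h := shannonEnt_smul (fun z : I × T × I => a z.1 z.2.1 * b z.2.2 z.2.1) hw2
      (show (0:ℝ) < n⁻¹ * n⁻¹ by positivity)
    simp only [] at h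
    rw [h, hw2sum, hw2ent, Real.logb_mul (inv_ne_zero hn) (inv_ne_zero hn), Real.logb_inv]
    have h2 : n⁻¹ * n⁻¹ * (n * n) = 1 := by field_simp
    rw [h2]
    ring
  -- assemble
  simp only [condMutInfo, mutInfo, Hrv]
  rw [dX, dY, dXY, dPY, dXPY, entX, entXY, entPY, entXPY]
  ring

end CondMIEval

lemma counting {I : Type} [Fintype I] [DecidableEq I] (A B : I → I → ℝ)
    (hA : ∀ x y, 0 ≤ A x y) (hB : ∀ x y, 0 ≤ B x y)
    (key : ∀ x x' y, x' ≠ x → 1/36 ≤ A x y + A x' y + B x' y + B x' x) :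
    (Fintype.card I : ℝ) * ((Fintype.card I : ℝ) - 1) / 72
      ≤ ∑ x, ∑ y, (A x y + B x y) := by
  rcases isEmpty_or_nonempty I with hI | hI
  · simp [Fintype.card_eq_zero]
  have hn0 : (0:ℝ) < (Fintype.card I : ℝ) := by exact_mod_cast Fintype.card_pos
  have hn1 : (1:ℝ) ≤ (Fintype.card I : ℝ) := by exact_mod_cast Fintype.card_pos
  set n : ℝ := (Fintype.card I : ℝ) with hndef
  have hcard_erase : ∀ x : I, ((Finset.univ.erase x).card : ℝ) = n - 1 := by
    intro x
    rw [Finset.card_erase_of_mem (Finset.mem_univ x), Finset.card_univ]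
    have : (1:ℕ) ≤ Fintype.card I := Fintype.card_pos
    push_cast [Nat.cast_sub this]
    rw [← hndef]
  set SA : ℝ := ∑ x, ∑ y, A x y with hSA
  set SB : ℝ := ∑ x, ∑ y, B x y with hSB
  have hSAnn : 0 ≤ SA := Finset.sum_nonneg fun x _ => Finset.sum_nonneg fun y _ => hA x y
  have hSBnn : 0 ≤ SB := Finset.sum_nonneg fun x _ => Finset.sum_nonneg fun y _ => hB x y
  -- lower bound on the triple sum
  have hlow : n * (n - 1) * n * (1/36)
      ≤ ∑ x, ∑ x' ∈ Finset.univ.erase x, ∑ y, (A x y + A x' y + B x' y + B x' x) := by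
    have h1 : ∀ x : I, ∀ x' ∈ Finset.univ.erase x,
        n * (1/36) ≤ ∑ y, (A x y + A x' y + B x' y + B x' x) := by
      intro x x' hx'
      have hne : x' ≠ x := Finset.ne_of_mem_erase hx'
      calc n * (1/36) = ∑ _y : I, (1/36 : ℝ) := by
            rw [Finset.sum_const, Finset.card_univ, nsmul_eq_mul, ← hndef]
        _ ≤ ∑ y, (A x y + A x' y + B x' y + B x' x) :=
            Finset.sum_le_sum fun y _ => key x x' y hne
    calc n * (n - 1) * n * (1/36) = ∑ x : I, ((n-1) * (n * (1/36))) := by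
          rw [Finset.sum_const, Finset.card_univ, nsmul_eq_mul, ← hndef]; ring
      _ ≤ ∑ x, ∑ x' ∈ Finset.univ.erase x, ∑ y, (A x y + A x' y + B x' y + B x' x) := by
          refine Finset.sum_le_sum fun x _ => ?_
          calc (n-1) * (n * (1/36)) = ∑ x' ∈ Finset.univ.erase x, (n * (1/36)) := by
                rw [Finset.sum_const, nsmul_eq_mul, hcard_erase x]
            _ ≤ _ := Finset.sum_le_sum fun x' hx' => h1 x x' hx'
  -- upper bound on the triple sum
  have hup : ∑ x, ∑ x' ∈ Finset.univ.erase x, ∑ y, (A x y + A x' y + B x' y + B x' x)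
      ≤ (n - 1) * SA + (n - 1) * SA + (n - 1) * SB + n * SB := by
    have split : ∀ x : I, ∀ x' : I, ∑ y, (A x y + A x' y + B x' y + B x' x)
        = (∑ y, A x y) + (∑ y, A x' y) + (∑ y, B x' y) + n * B x' x := by
      intro x x'
      rw [Finset.sum_add_distrib, Finset.sum_add_distrib, Finset.sum_add_distrib,
        Finset.sum_const, Finset.card_univ, nsmul_eq_mul, ← hndef]
    have e1 : ∑ x : I, ∑ x' ∈ Finset.univ.erase x, (∑ y, A x y) = (n-1) * SA := by
      rw [Finset.sum_congr rfl fun x (_ : x ∈ Finset.univ) => by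
        rw [Finset.sum_const, nsmul_eq_mul, hcard_erase x]]
      rw [hSA, ← Finset.mul_sum]
    have e2 : ∑ x : I, ∑ x' ∈ Finset.univ.erase x, (∑ y, A x' y) = (n-1) * SA := by
      have h2 : ∀ x : I, ∑ x' ∈ Finset.univ.erase x, (∑ y, A x' y)
          = SA - ∑ y, A x y := by
        intro x
        rw [Finset.sum_erase_eq_sub (Finset.mem_univ x), hSA]
      rw [Finset.sum_congr rfl fun x _ => h2 x, Finset.sum_sub_distrib,
        Finset.sum_const, Finset.card_univ, nsmul_eq_mul, ← hndef, ← hSA]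
      ring
    have e3 : ∑ x : I, ∑ x' ∈ Finset.univ.erase x, (∑ y, B x' y) = (n-1) * SB := by
      have h2 : ∀ x : I, ∑ x' ∈ Finset.univ.erase x, (∑ y, B x' y)
          = SB - ∑ y, B x y := by
        intro x
        rw [Finset.sum_erase_eq_sub (Finset.mem_univ x), hSB]
      rw [Finset.sum_congr rfl fun x _ => h2 x, Finset.sum_sub_distrib,
        Finset.sum_const, Finset.card_univ, nsmul_eq_mul, ← hndef, ← hSB]
      ring
    have e4 : ∑ x : I, ∑ x' ∈ Finset.univ.erase x, (n * B x' x) ≤ n * SB := by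
      have h2 : ∀ x : I, ∑ x' ∈ Finset.univ.erase x, (n * B x' x)
          ≤ ∑ x' : I, n * B x' x :=
        fun x => Finset.sum_le_sum_of_subset_of_nonneg (Finset.subset_univ _)
          (fun x' _ _ => mul_nonneg hn0.le (hB x' x))
      calc ∑ x : I, ∑ x' ∈ Finset.univ.erase x, (n * B x' x)
          ≤ ∑ x : I, ∑ x' : I, n * B x' x := Finset.sum_le_sum fun x _ => h2 x
        _ = n * SB := by
            rw [Finset.sum_comm, hSB, Finset.mul_sum]
            refine Finset.sum_congr rfl fun x' _ => ?_
            rw [Finset.mul_sum]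
    calc ∑ x, ∑ x' ∈ Finset.univ.erase x, ∑ y, (A x y + A x' y + B x' y + B x' x)
        = ∑ x : I, ∑ x' ∈ Finset.univ.erase x,
            ((∑ y, A x y) + (∑ y, A x' y) + (∑ y, B x' y) + n * B x' x) := by
          refine Finset.sum_congr rfl fun x _ => Finset.sum_congr rfl fun x' _ => split x x'
      _ = (∑ x : I, ∑ x' ∈ Finset.univ.erase x, (∑ y, A x y))
          + (∑ x : I, ∑ x' ∈ Finset.univ.erase x, (∑ y, A x' y))
          + (∑ x : I, ∑ x' ∈ Finset.univ.erase x, (∑ y, B x' y))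
          + ∑ x : I, ∑ x' ∈ Finset.univ.erase x, (n * B x' x) := by
          simp only [Finset.sum_add_distrib]
      _ ≤ (n - 1) * SA + (n - 1) * SA + (n - 1) * SB + n * SB := by
          rw [e1, e2, e3]
          linarith [e4]
  have hfin : ∑ x, ∑ y, (A x y + B x y) = SA + SB := by
    rw [hSA, hSB, ← Finset.sum_add_distrib]
    refine Finset.sum_congr rfl fun x _ => by rw [← Finset.sum_add_distrib]
  rw [hfin]
  nlinarith [hlow, hup, hSAnn, hSBnn, hn0, hn1]

lemma star_id {I : Type} [Fintype I] (f : I → ℝ) (g : I → I → ℝ) :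
    ∑ y, ∑ x, (f y - g x y) = (Fintype.card I : ℝ) * (∑ y, f y) - ∑ x, ∑ y, g x y := by
  rw [Finset.sum_congr rfl fun y (_ : y ∈ Finset.univ) => Finset.sum_sub_distrib _ _,
    Finset.sum_sub_distrib]
  congr 1
  · rw [Finset.mul_sum]
    refine Finset.sum_congr rfl fun y _ => ?_
    rw [Finset.sum_const, Finset.card_univ, nsmul_eq_mul]
  · exact Finset.sum_comm

lemma star_id2 {I : Type} [Fintype I] (f : I → ℝ) (g : I → I → ℝ) :
    ∑ x, ∑ y, (f x - g x y) = (Fintype.card I : ℝ) * (∑ x, f x) - ∑ x, ∑ y, g x y := by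
  rw [Finset.sum_congr rfl fun x (_ : x ∈ Finset.univ) => Finset.sum_sub_distrib _ _,
    Finset.sum_sub_distrib]
  congr 1
  rw [Finset.mul_sum]
  refine Finset.sum_congr rfl fun x _ => ?_
  rw [Finset.sum_const, Finset.card_univ, nsmul_eq_mul]


end Helpers

set_option maxHeartbeats 2000000 in
theorem main_general {I : Type} [Fintype I] [DecidableEq I] (hcard : 2 ≤ Fintype.card I)
    (P : Protocol I) (herr : ∀ x y : I, errOn P x y (decide (x = y)) ≤ 1 / 3) :
    infoCost P ≥ 1 / 432 := by
  classical
  haveI : Nonempty I := Fintype.card_pos_iff.mp (by omega)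
  have hn0 : (0:ℝ) < (Fintype.card I : ℝ) := by exact_mod_cast Fintype.card_pos
  have hn2 : (2:ℝ) ≤ (Fintype.card I : ℝ) := by exact_mod_cast hcard
  set n : ℝ := (Fintype.card I : ℝ) with hndef
  have hn : n ≠ 0 := ne_of_gt hn0
  have hπnn : ∀ x y : I, ∀ τ, 0 ≤ P.a x τ * P.b y τ :=
    fun x y τ => mul_nonneg (P.a_nonneg x τ) (P.b_nonneg y τ)
  -- error probability facts
  have hsum1 : ∀ x y : I, ∑ τ ∈ Finset.univ.filter (fun τ => P.o τ = true), P.a x τ * P.b y τ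
      + ∑ τ ∈ Finset.univ.filter (fun τ => ¬ (P.o τ = true)), P.a x τ * P.b y τ = 1 := by
    intro x y
    rw [Finset.sum_filter_add_sum_filter_not, P.sums_one]
  have hacc : ∀ x : I,
      2/3 ≤ ∑ τ ∈ Finset.univ.filter (fun τ => P.o τ = true), P.a x τ * P.b x τ := by
    intro x
    have h1 := herr x x
    rw [show (decide (x = x)) = true by simp] at h1
    unfold errOn at h1
    simp only [ne_eq] at h1
    have := hsum1 x x
    linarith
  have hrej : ∀ x y : I, x ≠ y →
      ∑ τ ∈ Finset.univ.filter (fun τ => P.o τ = true), P.a x τ * P.b y τ ≤ 1/3 := by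
    intro x y hxy
    have h1 := herr x y
    rw [show (decide (x = y)) = false from decide_eq_false hxy] at h1
    unfold errOn at h1
    have hfe : Finset.univ.filter (fun τ => P.o τ ≠ false)
        = Finset.univ.filter (fun τ => P.o τ = true) := by
      refine Finset.filter_congr fun τ _ => ?_
      simp
    rw [hfe] at h1
    linarith [h1, (by norm_num : (1:ℝ)/3 ≤ 1/3)]
  -- distance between accepting and rejecting distributions
  have hdistacc : ∀ x x' y : I, x' ≠ y →
      1/3 ≤ ‖sqv (fun τ => P.a x τ * P.b x τ) - sqv (fun τ => P.a x' τ * P.b y τ)‖ := by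
    intro x x' y h
    exact sqv_dist_ge _ _ _ (hπnn x x) (hπnn x' y) (P.sums_one x x) (P.sums_one x' y)
      (hacc x) (hrej x' y h)
  -- cut-and-paste
  have hcut : ∀ x x' y : I,
      ‖sqv (fun τ => P.a x τ * P.b y τ) - sqv (fun τ => P.a x' τ * P.b x τ)‖^2
      = ‖sqv (fun τ => P.a x τ * P.b x τ) - sqv (fun τ => P.a x' τ * P.b y τ)‖^2 := by
    intro x x' y
    rw [sqv_normsq _ _ (hπnn x y) (hπnn x' x), sqv_normsq _ _ (hπnn x x) (hπnn x' y),
      P.sums_one, P.sums_one, P.sums_one, P.sums_one]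
    have h : ∀ τ, Real.sqrt (P.a x τ * P.b y τ * (P.a x' τ * P.b x τ))
        = Real.sqrt (P.a x τ * P.b x τ * (P.a x' τ * P.b y τ)) := by
      intro τ
      exact congrArg Real.sqrt (by ring)
    rw [Finset.sum_congr rfl fun τ _ => h τ]
  -- per-triple geometric bound
  have key : ∀ x x' y : I, x' ≠ x →
      1/36 ≤ ‖sqv (fun τ => P.a x τ * P.b y τ)
                - sqv (fun τ => n⁻¹ * ∑ x'', P.a x'' τ * P.b y τ)‖^2
           + ‖sqv (fun τ => P.a x' τ * P.b y τ)
                - sqv (fun τ => n⁻¹ * ∑ x'', P.a x'' τ * P.b y τ)‖^2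
           + ‖sqv (fun τ => P.a x' τ * P.b y τ)
                - sqv (fun τ => n⁻¹ * ∑ y'', P.a x' τ * P.b y'' τ)‖^2
           + ‖sqv (fun τ => P.a x' τ * P.b x τ)
                - sqv (fun τ => n⁻¹ * ∑ y'', P.a x' τ * P.b y'' τ)‖^2 := by
    intro x x' y hne
    set s := ‖sqv (fun τ => P.a x τ * P.b y τ)
        - sqv (fun τ => n⁻¹ * ∑ x'', P.a x'' τ * P.b y τ)‖ with hs
    set t := ‖sqv (fun τ => P.a x' τ * P.b y τ)
        - sqv (fun τ => n⁻¹ * ∑ x'', P.a x'' τ * P.b y τ)‖ with ht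
    set u := ‖sqv (fun τ => P.a x' τ * P.b y τ)
        - sqv (fun τ => n⁻¹ * ∑ y'', P.a x' τ * P.b y'' τ)‖ with hu
    set v := ‖sqv (fun τ => P.a x' τ * P.b x τ)
        - sqv (fun τ => n⁻¹ * ∑ y'', P.a x' τ * P.b y'' τ)‖ with hv
    have hsnn : 0 ≤ s := norm_nonneg _
    have htnn : 0 ≤ t := norm_nonneg _
    have hunn : 0 ≤ u := norm_nonneg _
    have hvnn : 0 ≤ v := norm_nonneg _
    by_cases hxy : x' = y
    · -- x' = y, so x ≠ y and π x y rejects while π y y accepts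
      have hxney : x ≠ y := fun h => hne (hxy.trans h.symm)
      have h13 : 1/3 ≤ ‖sqv (fun τ => P.a y τ * P.b y τ)
          - sqv (fun τ => P.a x τ * P.b y τ)‖ := hdistacc y x y hxney
      rw [norm_sub_rev] at h13
      have h13' : 1/3 ≤ ‖sqv (fun τ => P.a x τ * P.b y τ)
          - sqv (fun τ => P.a x' τ * P.b y τ)‖ := by rw [hxy]; exact h13
      have htri : ‖sqv (fun τ => P.a x τ * P.b y τ)
          - sqv (fun τ => P.a x' τ * P.b y τ)‖ ≤ s + t := by
        calc ‖sqv (fun τ => P.a x τ * P.b y τ) - sqv (fun τ => P.a x' τ * P.b y τ)‖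
            ≤ ‖sqv (fun τ => P.a x τ * P.b y τ)
                - sqv (fun τ => n⁻¹ * ∑ x'', P.a x'' τ * P.b y τ)‖
              + ‖sqv (fun τ => n⁻¹ * ∑ x'', P.a x'' τ * P.b y τ)
                - sqv (fun τ => P.a x' τ * P.b y τ)‖ :=
              norm_sub_le_norm_sub_add_norm_sub _ _ _
          _ = s + t := by rw [hs, ht, norm_sub_rev (sqv fun τ => n⁻¹ * ∑ x'', P.a x'' τ * P.b y τ)]
      nlinarith [sq_nonneg (s - t), sq_nonneg u, sq_nonneg v]
    · -- x' ≠ y : use cut-and-paste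
      have hc1 := hdistacc x x' y hxy
      have hc2 := hcut x x' y
      have h13 : 1/3 ≤ ‖sqv (fun τ => P.a x τ * P.b y τ)
          - sqv (fun τ => P.a x' τ * P.b x τ)‖ := by
        nlinarith [norm_nonneg (sqv (fun τ => P.a x τ * P.b y τ)
          - sqv (fun τ => P.a x' τ * P.b x τ)),
          norm_nonneg (sqv (fun τ => P.a x τ * P.b x τ)
          - sqv (fun τ => P.a x' τ * P.b y τ))]
      have htri : ‖sqv (fun τ => P.a x τ * P.b y τ)
          - sqv (fun τ => P.a x' τ * P.b x τ)‖ ≤ s + t + u + v := by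
        calc ‖sqv (fun τ => P.a x τ * P.b y τ) - sqv (fun τ => P.a x' τ * P.b x τ)‖
            ≤ ‖sqv (fun τ => P.a x τ * P.b y τ)
                - sqv (fun τ => n⁻¹ * ∑ x'', P.a x'' τ * P.b y τ)‖
              + ‖sqv (fun τ => n⁻¹ * ∑ x'', P.a x'' τ * P.b y τ)
                - sqv (fun τ => P.a x' τ * P.b x τ)‖ :=
              norm_sub_le_norm_sub_add_norm_sub _ _ _
          _ ≤ s + (‖sqv (fun τ => n⁻¹ * ∑ x'', P.a x'' τ * P.b y τ)
                - sqv (fun τ => P.a x' τ * P.b y τ)‖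
              + ‖sqv (fun τ => P.a x' τ * P.b y τ)
                - sqv (fun τ => P.a x' τ * P.b x τ)‖) := by
              rw [hs]
              exact add_le_add_right (norm_sub_le_norm_sub_add_norm_sub _ _ _) _
          _ ≤ s + (t + (‖sqv (fun τ => P.a x' τ * P.b y τ)
                - sqv (fun τ => n⁻¹ * ∑ y'', P.a x' τ * P.b y'' τ)‖
              + ‖sqv (fun τ => n⁻¹ * ∑ y'', P.a x' τ * P.b y'' τ)
                - sqv (fun τ => P.a x' τ * P.b x τ)‖)) := by
              rw [ht, norm_sub_rev (sqv fun τ => n⁻¹ * ∑ x'', P.a x'' τ * P.b y τ)]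
              exact add_le_add_right (add_le_add_right
                (norm_sub_le_norm_sub_add_norm_sub _ _ _) _) _
          _ = s + t + u + v := by
              rw [hu, hv, norm_sub_rev (sqv fun τ => n⁻¹ * ∑ y'', P.a x' τ * P.b y'' τ)]
              ring
      nlinarith [sq_nonneg (s - t), sq_nonneg (s - u), sq_nonneg (s - v),
        sq_nonneg (t - u), sq_nonneg (t - v), sq_nonneg (u - v)]
  -- counting
  have hcount := counting
    (fun x y => ‖sqv (fun τ => P.a x τ * P.b y τ)
        - sqv (fun τ => n⁻¹ * ∑ x'', P.a x'' τ * P.b y τ)‖^2)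
    (fun x y => ‖sqv (fun τ => P.a x τ * P.b y τ)
        - sqv (fun τ => n⁻¹ * ∑ y'', P.a x τ * P.b y'' τ)‖^2)
    (fun x y => sq_nonneg _) (fun x y => sq_nonneg _)
    (fun x x' y h => key x x' y h)
  rw [← hndef] at hcount
  -- evaluate the two conditional mutual informations
  have hE1 := condMI_eval P.a P.b P.a_nonneg P.b_nonneg P.sums_one
  rw [← hndef] at hE1
  have hab' : ∀ x y : I, ∑ τ, P.b x τ * P.a y τ = 1 := by
    intro x y
    rw [Finset.sum_congr rfl fun τ (_ : τ ∈ Finset.univ) => mul_comm (P.b x τ) (P.a y τ)]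
    exact P.sums_one y x
  have hE2raw := condMI_eval P.b P.a P.b_nonneg P.a_nonneg hab'
  rw [← hndef] at hE2raw
  -- transport along the swap equivalence
  have htrans := condMutInfo_comp_equiv
    (show (I × I × P.T) ≃ (I × I × P.T) from
      ⟨fun ω => (ω.2.1, ω.1, ω.2.2), fun ω => (ω.2.1, ω.1, ω.2.2), fun ω => rfl, fun ω => rfl⟩)
    (fun ω : I × I × P.T => (Fintype.card I : ℝ)⁻¹ * (Fintype.card I : ℝ)⁻¹ *
      (P.a ω.1 ω.2.2 * P.b ω.2.1 ω.2.2))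
    (fun ω => ω.2.1) (fun ω => ω.2.2) (fun ω => ω.1)
  rw [← hndef] at htrans
  simp only [Equiv.coe_fn_mk] at htrans
  have hfun : (fun ω' : I × I × P.T => n⁻¹ * n⁻¹ * (P.a ω'.2.1 ω'.2.2 * P.b ω'.1 ω'.2.2))
      = (fun ω' : I × I × P.T => n⁻¹ * n⁻¹ * (P.b ω'.1 ω'.2.2 * P.a ω'.2.1 ω'.2.2)) := by
    funext ω; ring
  rw [hfun] at htrans
  have hE2 := htrans.symm.trans hE2raw
  -- cosmetic rewrites on hE2
  have swapQ : ∀ y : I, (fun τ => n⁻¹ * ∑ x, P.b x τ * P.a y τ)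
      = (fun τ => n⁻¹ * ∑ x'', P.a y τ * P.b x'' τ) := by
    intro y; funext τ; congr 1
    exact Finset.sum_congr rfl fun x _ => mul_comm _ _
  have swapπ : ∀ x y : I, (fun τ => P.b x τ * P.a y τ) = (fun τ => P.a y τ * P.b x τ) :=
    fun x y => funext fun τ => mul_comm _ _
  simp only [swapQ, swapπ] at hE2
  have swapsum : ∑ x : I, ∑ y : I, shannonEnt (fun τ => P.a y τ * P.b x τ)
      = ∑ y : I, ∑ x : I, shannonEnt (fun τ => P.a y τ * P.b x τ) := Finset.sum_comm
  rw [swapsum] at hE2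
  -- hE2 now expressed with R and standard-orientation entropies
  -- KL (divergence vs Hellinger) inequalities
  have hKA : ∑ y : I, ∑ x : I, ‖sqv (fun τ => P.a x τ * P.b y τ)
        - sqv (fun τ => n⁻¹ * ∑ x'', P.a x'' τ * P.b y τ)‖^2
      ≤ ∑ y : I, ∑ x : I, (shannonEnt (fun τ => n⁻¹ * ∑ x'', P.a x'' τ * P.b y τ)
        - shannonEnt (fun τ => P.a x τ * P.b y τ)) := by
    refine Finset.sum_le_sum fun y _ => ?_
    have h := sum_KL_ge (fun x τ => P.a x τ * P.b y τ) (fun x τ => hπnn x y τ)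
      (fun x => P.sums_one x y)
    rw [← hndef] at h
    exact h
  have hKB : ∑ x : I, ∑ y : I, ‖sqv (fun τ => P.a x τ * P.b y τ)
        - sqv (fun τ => n⁻¹ * ∑ y'', P.a x τ * P.b y'' τ)‖^2
      ≤ ∑ x : I, ∑ y : I, (shannonEnt (fun τ => n⁻¹ * ∑ y'', P.a x τ * P.b y'' τ)
        - shannonEnt (fun τ => P.a x τ * P.b y τ)) := by
    refine Finset.sum_le_sum fun x _ => ?_
    have h := sum_KL_ge (fun y τ => P.a x τ * P.b y τ) (fun y τ => hπnn x y τ)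
      (fun y => P.sums_one x y)
    rw [← hndef] at h
    exact h
  -- identities putting the info terms in double-difference form
  have starA : ∑ y : I, ∑ x : I, (shannonEnt (fun τ => n⁻¹ * ∑ x'', P.a x'' τ * P.b y τ)
        - shannonEnt (fun τ => P.a x τ * P.b y τ))
      = n * (∑ y, shannonEnt (fun τ => n⁻¹ * ∑ x'', P.a x'' τ * P.b y τ))
        - ∑ x, ∑ y, shannonEnt (fun τ => P.a x τ * P.b y τ) := by
    have h := star_id (fun y => shannonEnt (fun τ => n⁻¹ * ∑ x'', P.a x'' τ * P.b y τ))
      (fun x y => shannonEnt (fun τ => P.a x τ * P.b y τ))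
    rw [← hndef] at h
    exact h
  have starB : ∑ x : I, ∑ y : I, (shannonEnt (fun τ => n⁻¹ * ∑ y'', P.a x τ * P.b y'' τ)
        - shannonEnt (fun τ => P.a x τ * P.b y τ))
      = n * (∑ x, shannonEnt (fun τ => n⁻¹ * ∑ y'', P.a x τ * P.b y'' τ))
        - ∑ x, ∑ y, shannonEnt (fun τ => P.a x τ * P.b y τ) := by
    have h := star_id2 (fun x => shannonEnt (fun τ => n⁻¹ * ∑ y'', P.a x τ * P.b y'' τ))
      (fun x y => shannonEnt (fun τ => P.a x τ * P.b y τ))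
    rw [← hndef] at h
    exact h
  have idA : n⁻¹ * ∑ y, shannonEnt (fun τ => n⁻¹ * ∑ x, P.a x τ * P.b y τ)
      - n⁻¹ * (n⁻¹ * ∑ x, ∑ y, shannonEnt (fun τ => P.a x τ * P.b y τ))
      = n⁻¹ * n⁻¹ * ∑ y : I, ∑ x : I,
          (shannonEnt (fun τ => n⁻¹ * ∑ x'', P.a x'' τ * P.b y τ)
            - shannonEnt (fun τ => P.a x τ * P.b y τ)) := by
    rw [starA]
    field_simp
  have idB : n⁻¹ * ∑ y, shannonEnt (fun τ => n⁻¹ * ∑ x'', P.a y τ * P.b x'' τ)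
      - n⁻¹ * (n⁻¹ * ∑ y, ∑ x, shannonEnt (fun τ => P.a y τ * P.b x τ))
      = n⁻¹ * n⁻¹ * ∑ x : I, ∑ y : I,
          (shannonEnt (fun τ => n⁻¹ * ∑ y'', P.a x τ * P.b y'' τ)
            - shannonEnt (fun τ => P.a x τ * P.b y τ)) := by
    rw [starB]
    field_simp
  -- final assembly
  have hic : infoCost P
      = condMutInfo (fun ω : I × I × P.T => n⁻¹ * n⁻¹ * (P.a ω.1 ω.2.2 * P.b ω.2.1 ω.2.2))
          (fun ω => ω.1) (fun ω => ω.2.2) (fun ω => ω.2.1)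
        + condMutInfo (fun ω : I × I × P.T => n⁻¹ * n⁻¹ * (P.a ω.1 ω.2.2 * P.b ω.2.1 ω.2.2))
          (fun ω => ω.2.1) (fun ω => ω.2.2) (fun ω => ω.1) := rfl
  have hnn2 : (0:ℝ) ≤ n⁻¹ * n⁻¹ := by positivity
  have step1 := mul_le_mul_of_nonneg_left hKA hnn2
  have step2 := mul_le_mul_of_nonneg_left hKB hnn2
  have hswapA : ∑ y : I, ∑ x : I, ‖sqv (fun τ => P.a x τ * P.b y τ)
        - sqv (fun τ => n⁻¹ * ∑ x'', P.a x'' τ * P.b y τ)‖^2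
      = ∑ x : I, ∑ y : I, ‖sqv (fun τ => P.a x τ * P.b y τ)
        - sqv (fun τ => n⁻¹ * ∑ x'', P.a x'' τ * P.b y τ)‖^2 := Finset.sum_comm
  have hmerge : ∑ x : I, ∑ y : I, (‖sqv (fun τ => P.a x τ * P.b y τ)
        - sqv (fun τ => n⁻¹ * ∑ x'', P.a x'' τ * P.b y τ)‖^2
      + ‖sqv (fun τ => P.a x τ * P.b y τ)
        - sqv (fun τ => n⁻¹ * ∑ y'', P.a x τ * P.b y'' τ)‖^2)
      = (∑ x : I, ∑ y : I, ‖sqv (fun τ => P.a x τ * P.b y τ)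
        - sqv (fun τ => n⁻¹ * ∑ x'', P.a x'' τ * P.b y τ)‖^2)
      + ∑ x : I, ∑ y : I, ‖sqv (fun τ => P.a x τ * P.b y τ)
        - sqv (fun τ => n⁻¹ * ∑ y'', P.a x τ * P.b y'' τ)‖^2 := by
    rw [← Finset.sum_add_distrib]
    exact Finset.sum_congr rfl fun x _ => Finset.sum_add_distrib
  have hfinal : n⁻¹ * n⁻¹ * (n * (n - 1) / 72) ≤ infoCost P := by
    rw [hic, hE1, hE2, idA, idB]
    calc n⁻¹ * n⁻¹ * (n * (n - 1) / 72)
        ≤ n⁻¹ * n⁻¹ * (∑ x : I, ∑ y : I, (‖sqv (fun τ => P.a x τ * P.b y τ)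
            - sqv (fun τ => n⁻¹ * ∑ x'', P.a x'' τ * P.b y τ)‖^2
          + ‖sqv (fun τ => P.a x τ * P.b y τ)
            - sqv (fun τ => n⁻¹ * ∑ y'', P.a x τ * P.b y'' τ)‖^2)) :=
          mul_le_mul_of_nonneg_left hcount hnn2
      _ ≤ _ := by
          rw [hmerge, mul_add, ← hswapA]
          linarith [step1, step2]
  calc (1:ℝ)/432 ≤ n⁻¹ * n⁻¹ * (n * (n - 1) / 72) := by
        rw [show n⁻¹ * n⁻¹ * (n * (n - 1) / 72) = (n - 1) / (72 * n) by field_simp]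
        rw [div_le_div_iff₀ (by norm_num) (by positivity)]
        linarith
    _ ≤ infoCost P := hfinal

/-- Information cost lower bound for Equality: any private-coin protocol computing
`EQ` on `{0,1}^k` with worst-case error at most `1/3` has internal information cost
at least `1/432` under independent uniform inputs. -/
theorem eq_info_lower_bound {k : ℕ} (hk : 1 ≤ k) (P : Protocol (Fin k → Bool))
    (herr : ∀ x y : Fin k → Bool, errOn P x y (decide (x = y)) ≤ 1 / 3) :
    infoCost P ≥ 1 / 432 := by
  refine main_general ?_ P herr
  rw [Fintype.card_fun, Fintype.card_fin, Fintype.card_bool]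
  calc 2 = 2^1 := rfl
    _ ≤ 2^k := Nat.pow_le_pow_right (by norm_num) hk
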